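/- Let H_reg(x,y) = (H_{L_H**}(x,y) − H_{L_H**}(y,x))/2 for H ∈ C(Ω̄ × Ω̄) anti-symmetric. Then L_{H_reg}(x,p) := sup_{y ∈ Ω̄}{⟨y,p⟩ − H_reg(y,x)} satisfies L_{H_reg}(x,p) ≤ L_H**(x,p) ≤ L_H(x,p) for all (x,p) ∈ Ω̄ × B_R. -/

import Mathlib

open MeasureTheory Set

noncomputable section

variable {N : ℕ}

/-- `L_H(x,p) = sup_{y ∈ Ω̄} {⟨y,p⟩ - H(y,x)}`. -/
def LH (Ω : Set (EuclideanSpace ℝ (Fin N)))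
    (H : EuclideanSpace ℝ (Fin N) → EuclideanSpace ℝ (Fin N) → ℝ)
    (x p : EuclideanSpace ℝ (Fin N)) : ℝ :=
  ⨆ y : closure Ω, ((inner ℝ (y : EuclideanSpace ℝ (Fin N)) p : ℝ) - H y x)

/-- Restricted Fenchel dual `L_H*(q,y) = sup_{x ∈ Ω̄, p ∈ B_R} {⟨y,p⟩ + ⟨q,x⟩ - L_H(x,p)}`. -/
def LHstar (Ω : Set (EuclideanSpace ℝ (Fin N))) (R : ℝ)
    (H : EuclideanSpace ℝ (Fin N) → EuclideanSpace ℝ (Fin N) → ℝ)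
    (q y : EuclideanSpace ℝ (Fin N)) : ℝ :=
  ⨆ x : closure Ω, ⨆ p : Metric.closedBall (0 : EuclideanSpace ℝ (Fin N)) R,
    ((inner ℝ y (p : EuclideanSpace ℝ (Fin N)) : ℝ)
      + (inner ℝ q (x : EuclideanSpace ℝ (Fin N)) : ℝ) - LH Ω H x p)

/-- `L_H**(y,q) = sup_{x ∈ Ω̄, p ∈ B_R} {⟨y,p⟩ + ⟨q,x⟩ - L_H*(p,x)}`. -/
def LHstarstar (Ω : Set (EuclideanSpace ℝ (Fin N))) (R : ℝ)
    (H : EuclideanSpace ℝ (Fin N) → EuclideanSpace ℝ (Fin N) → ℝ)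
    (y q : EuclideanSpace ℝ (Fin N)) : ℝ :=
  ⨆ x : closure Ω, ⨆ p : Metric.closedBall (0 : EuclideanSpace ℝ (Fin N)) R,
    ((inner ℝ y (p : EuclideanSpace ℝ (Fin N)) : ℝ)
      + (inner ℝ q (x : EuclideanSpace ℝ (Fin N)) : ℝ) - LHstar Ω R H p x)

/-- The `B_R`-Hamiltonian of `L`: `H_L(x,y) = sup_{p ∈ B_R} {⟨x,p⟩ - L(y,p)}`. -/
def HLB (R : ℝ)
    (L : EuclideanSpace ℝ (Fin N) → EuclideanSpace ℝ (Fin N) → ℝ)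
    (x y : EuclideanSpace ℝ (Fin N)) : ℝ :=
  ⨆ p : Metric.closedBall (0 : EuclideanSpace ℝ (Fin N)) R,
    ((inner ℝ x (p : EuclideanSpace ℝ (Fin N)) : ℝ) - L y p)

end

private lemma bdd_of_le {ι : Type*} {f : ι → ℝ} {M : ℝ} (h : ∀ i, f i ≤ M) :
    BddAbove (Set.range f) := ⟨M, by rintro _ ⟨i, rfl⟩; exact h i⟩

private lemma le_ciSup₂' {ι κ : Type*} [Nonempty ι] [Nonempty κ] (f : ι → κ → ℝ) {M : ℝ}
    (hM : ∀ i j, f i j ≤ M) (i : ι) (j : κ) : f i j ≤ ⨆ i, ⨆ j, f i j :=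
  (le_ciSup (bdd_of_le (hM i)) j).trans
    (le_ciSup (f := fun i => ⨆ j, f i j) (bdd_of_le fun i => ciSup_le (hM i)) i)

/-- Proposition 2.4 (2): with `H_reg(x,y) = (H_{L_H**}(x,y) - H_{L_H**}(y,x))/2`,
one has `L_{H_reg}(x,p) ≤ L_H**(x,p) ≤ L_H(x,p)` on `Ω̄ × B_R`. -/
theorem LHreg_le_LHstarstar_le_LH {N : ℕ} (R : ℝ) (hR : 0 < R)
    (Ω : Set (EuclideanSpace ℝ (Fin N))) (hΩopen : IsOpen Ω)
    (hΩ : Ω ⊆ Metric.closedBall (0 : EuclideanSpace ℝ (Fin N)) R)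
    (hΩne : Ω.Nonempty)
    (H : EuclideanSpace ℝ (Fin N) → EuclideanSpace ℝ (Fin N) → ℝ)
    (hHcont : ContinuousOn (fun q : EuclideanSpace ℝ (Fin N) × EuclideanSpace ℝ (Fin N) =>
      H q.1 q.2) ((closure Ω) ×ˢ (closure Ω)))
    (hHskew : ∀ x ∈ closure Ω, ∀ y ∈ closure Ω, H x y = - H y x) :
    ∀ x ∈ closure Ω, ∀ p ∈ Metric.closedBall (0 : EuclideanSpace ℝ (Fin N)) R,
      LH Ω (fun a b => (HLB R (LHstarstar Ω R H) a b - HLB R (LHstarstar Ω R H) b a) / 2) x p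
          ≤ LHstarstar Ω R H x p ∧
        LHstarstar Ω R H x p ≤ LH Ω H x p := by
  classical
  have hΩc : closure Ω ⊆ Metric.closedBall (0 : EuclideanSpace ℝ (Fin N)) R :=
    closure_minimal hΩ Metric.isClosed_closedBall
  haveI hne1 : Nonempty ↥(closure Ω) := hΩne.closure.to_subtype
  haveI hne2 : Nonempty ↥(Metric.closedBall (0 : EuclideanSpace ℝ (Fin N)) R) :=
    (Metric.nonempty_closedBall.mpr hR.le).to_subtype
  obtain ⟨y₀, hy₀⟩ : (closure Ω).Nonempty := hΩne.closure
  have h0B : (0 : EuclideanSpace ℝ (Fin N)) ∈ Metric.closedBall (0 : EuclideanSpace ℝ (Fin N)) R :=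
    Metric.mem_closedBall_self hR.le
  have hcompΩ : IsCompact (closure Ω) :=
    (isCompact_closedBall (0 : EuclideanSpace ℝ (Fin N)) R).of_isClosed_subset
      isClosed_closure hΩc
  obtain ⟨C₀, hC₀⟩ := (hcompΩ.prod hcompΩ).exists_bound_of_continuousOn hHcont
  set C := max C₀ 0 with hCdef
  have hC : ∀ a ∈ closure Ω, ∀ b ∈ closure Ω, |H a b| ≤ C := by
    intro a ha b hb
    have := hC₀ (a, b) ⟨ha, hb⟩
    simp only [Real.norm_eq_abs] at this
    exact this.trans (le_max_left _ _)
  have hCnn : (0:ℝ) ≤ C := le_max_right _ _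
  have hRR : (0:ℝ) ≤ R * R := mul_nonneg hR.le hR.le
  have hnx : ∀ a ∈ closure Ω, ‖a‖ ≤ R := fun a ha => mem_closedBall_zero_iff.mp (hΩc ha)
  have hnp : ∀ b ∈ Metric.closedBall (0 : EuclideanSpace ℝ (Fin N)) R, ‖b‖ ≤ R :=
    fun b hb => mem_closedBall_zero_iff.mp hb
  have hip : ∀ a b : EuclideanSpace ℝ (Fin N), ‖a‖ ≤ R → ‖b‖ ≤ R →
      |(inner ℝ a b : ℝ)| ≤ R * R := fun a b ha hb =>
    (abs_real_inner_le_norm a b).trans (mul_le_mul ha hb (norm_nonneg b) hR.le)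
  -- bounds on LH
  have hLterm : ∀ x' ∈ closure Ω, ∀ p' ∈ Metric.closedBall (0 : EuclideanSpace ℝ (Fin N)) R,
      ∀ y : closure Ω, (inner ℝ (y : EuclideanSpace ℝ (Fin N)) p' : ℝ) - H y x' ≤ R*R + C := by
    intro x' hx' p' hp' y
    have h1 := (abs_le.mp (hip y p' (hnx y y.2) (hnp p' hp'))).2
    have h2 := (abs_le.mp (hC y y.2 x' hx')).1
    linarith
  have hLub : ∀ x' ∈ closure Ω, ∀ p' ∈ Metric.closedBall (0 : EuclideanSpace ℝ (Fin N)) R,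
      LH Ω H x' p' ≤ R*R + C := fun x' hx' p' hp' => ciSup_le (hLterm x' hx' p' hp')
  have hLge : ∀ x' ∈ closure Ω, ∀ p' ∈ Metric.closedBall (0 : EuclideanSpace ℝ (Fin N)) R,
      ∀ y ∈ closure Ω, (inner ℝ y p' : ℝ) - H y x' ≤ LH Ω H x' p' := by
    intro x' hx' p' hp' y hy
    exact le_ciSup (f := fun y : closure Ω =>
      ((inner ℝ (y : EuclideanSpace ℝ (Fin N)) p' : ℝ) - H y x'))
      (bdd_of_le (hLterm x' hx' p' hp')) ⟨y, hy⟩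
  have hLlb : ∀ x' ∈ closure Ω, ∀ p' ∈ Metric.closedBall (0 : EuclideanSpace ℝ (Fin N)) R,
      -(R*R) - C ≤ LH Ω H x' p' := by
    intro x' hx' p' hp'
    have h1 := (abs_le.mp (hip y₀ p' (hnx y₀ hy₀) (hnp p' hp'))).1
    have h2 := (abs_le.mp (hC y₀ hy₀ x' hx')).2
    have h3 := hLge x' hx' p' hp' y₀ hy₀
    linarith
  -- bounds on LHstar
  have hLsterm : ∀ q ∈ Metric.closedBall (0 : EuclideanSpace ℝ (Fin N)) R, ∀ y ∈ closure Ω,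
      ∀ (x' : closure Ω) (p' : Metric.closedBall (0 : EuclideanSpace ℝ (Fin N)) R),
      (inner ℝ y (p' : EuclideanSpace ℝ (Fin N)) : ℝ)
        + (inner ℝ q (x' : EuclideanSpace ℝ (Fin N)) : ℝ) - LH Ω H x' p' ≤ 3*(R*R) + C := by
    intro q hq y hy x' p'
    have h1 := (abs_le.mp (hip y p' (hnx y hy) (hnp p' p'.2))).2
    have h2 := (abs_le.mp (hip q x' (hnp q hq) (hnx x' x'.2))).2
    have h3 := hLlb x' x'.2 p' p'.2
    linarith
  have hLs_ub : ∀ q ∈ Metric.closedBall (0 : EuclideanSpace ℝ (Fin N)) R, ∀ y ∈ closure Ω,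
      LHstar Ω R H q y ≤ 3*(R*R) + C := fun q hq y hy =>
    ciSup_le fun x' => ciSup_le fun p' => hLsterm q hq y hy x' p'
  have hLs_ge : ∀ q ∈ Metric.closedBall (0 : EuclideanSpace ℝ (Fin N)) R, ∀ y ∈ closure Ω,
      ∀ x' ∈ closure Ω, ∀ p' ∈ Metric.closedBall (0 : EuclideanSpace ℝ (Fin N)) R,
      (inner ℝ y p' : ℝ) + (inner ℝ q x' : ℝ) - LH Ω H x' p' ≤ LHstar Ω R H q y := by
    intro q hq y hy x' hx' p' hp'
    exact le_ciSup₂' (fun (a : closure Ω)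
        (b : Metric.closedBall (0 : EuclideanSpace ℝ (Fin N)) R) =>
        (inner ℝ y (b : EuclideanSpace ℝ (Fin N)) : ℝ)
          + (inner ℝ q (a : EuclideanSpace ℝ (Fin N)) : ℝ) - LH Ω H a b)
      (hLsterm q hq y hy) ⟨x', hx'⟩ ⟨p', hp'⟩
  -- bounds on LHstarstar
  have hLssterm : ∀ y ∈ closure Ω, ∀ q ∈ Metric.closedBall (0 : EuclideanSpace ℝ (Fin N)) R,
      ∀ (x' : closure Ω) (p' : Metric.closedBall (0 : EuclideanSpace ℝ (Fin N)) R),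
      (inner ℝ y (p' : EuclideanSpace ℝ (Fin N)) : ℝ)
        + (inner ℝ q (x' : EuclideanSpace ℝ (Fin N)) : ℝ) - LHstar Ω R H p' x'
        ≤ 5*(R*R) + 2*C := by
    intro y hy q hq x' p'
    have h1 := (abs_le.mp (hip y p' (hnx y hy) (hnp p' p'.2))).2
    have h2 := (abs_le.mp (hip q x' (hnp q hq) (hnx x' x'.2))).2
    -- lower bound for LHstar p' x' : use index (y₀, 0)
    have h3 := hLs_ge p' p'.2 x' x'.2 y₀ hy₀ 0 h0B
    have h4 : (inner ℝ (x' : EuclideanSpace ℝ (Fin N)) (0 : EuclideanSpace ℝ (Fin N)) : ℝ) = 0 :=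
      inner_zero_right _
    have h5 := (abs_le.mp (hip (p' : EuclideanSpace ℝ (Fin N)) y₀ (hnp p' p'.2) (hnx y₀ hy₀))).1
    have h6 := hLub y₀ hy₀ 0 h0B
    linarith
  have hLss_ge : ∀ y ∈ closure Ω, ∀ q ∈ Metric.closedBall (0 : EuclideanSpace ℝ (Fin N)) R,
      ∀ x' ∈ closure Ω, ∀ p' ∈ Metric.closedBall (0 : EuclideanSpace ℝ (Fin N)) R,
      (inner ℝ y p' : ℝ) + (inner ℝ q x' : ℝ) - LHstar Ω R H p' x' ≤ LHstarstar Ω R H y q := by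
    intro y hy q hq x' hx' p' hp'
    exact le_ciSup₂' (fun (a : closure Ω)
        (b : Metric.closedBall (0 : EuclideanSpace ℝ (Fin N)) R) =>
        (inner ℝ y (b : EuclideanSpace ℝ (Fin N)) : ℝ)
          + (inner ℝ q (a : EuclideanSpace ℝ (Fin N)) : ℝ) - LHstar Ω R H b a)
      (hLssterm y hy q hq) ⟨x', hx'⟩ ⟨p', hp'⟩
  have hLss_lb : ∀ y ∈ closure Ω, ∀ q ∈ Metric.closedBall (0 : EuclideanSpace ℝ (Fin N)) R,
      -(4*(R*R)) - C ≤ LHstarstar Ω R H y q := by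
    intro y hy q hq
    have h := hLss_ge y hy q hq y₀ hy₀ 0 h0B
    have h1 : (inner ℝ y (0 : EuclideanSpace ℝ (Fin N)) : ℝ) = 0 := inner_zero_right _
    have h2 := (abs_le.mp (hip q y₀ (hnp q hq) (hnx y₀ hy₀))).1
    have h3 := hLs_ub 0 h0B y₀ hy₀
    linarith
  -- key lemma A : LHstar p' x' ≤ LH x' p'
  have hA : ∀ x' ∈ closure Ω, ∀ p' ∈ Metric.closedBall (0 : EuclideanSpace ℝ (Fin N)) R,
      LHstar Ω R H p' x' ≤ LH Ω H x' p' := by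
    intro x' hx' p' hp'
    refine ciSup_le fun a => ciSup_le fun b => ?_
    have h1 := hLge a a.2 b b.2 x' hx'
    have h2 := hLge x' hx' p' hp' a a.2
    have h3 : H x' (a : EuclideanSpace ℝ (Fin N)) = - H a x' := hHskew x' hx' a a.2
    have h4 : (inner ℝ (p' : EuclideanSpace ℝ (Fin N)) (a : EuclideanSpace ℝ (Fin N)) : ℝ)
        = (inner ℝ (a : EuclideanSpace ℝ (Fin N)) (p' : EuclideanSpace ℝ (Fin N)) : ℝ) :=
      real_inner_comm _ _
    linarith
  -- key lemma B : LHstar q y ≤ LHstarstar y q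
  have hB : ∀ y ∈ closure Ω, ∀ q ∈ Metric.closedBall (0 : EuclideanSpace ℝ (Fin N)) R,
      LHstar Ω R H q y ≤ LHstarstar Ω R H y q := by
    intro y hy q hq
    refine ciSup_le fun x' => ciSup_le fun p' => ?_
    have h1 := hA x' x'.2 p' p'.2
    have h2 := hLss_ge y hy q hq x' x'.2 p' p'.2
    linarith
  -- skewness of the Hamiltonian of LHstarstar
  have hskew2 : ∀ a ∈ closure Ω, ∀ b ∈ closure Ω,
      HLB R (LHstarstar Ω R H) a b + HLB R (LHstarstar Ω R H) b a ≤ 0 := by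
    intro a ha b hb
    have hb1 : HLB R (LHstarstar Ω R H) a b ≤ - HLB R (LHstarstar Ω R H) b a := by
      refine ciSup_le fun p => ?_
      have key : HLB R (LHstarstar Ω R H) b a
          ≤ LHstarstar Ω R H b p - (inner ℝ a (p : EuclideanSpace ℝ (Fin N)) : ℝ) := by
        refine ciSup_le fun p' => ?_
        have h1 := hLss_ge b hb p p.2 a ha p' p'.2
        have h2 := hB a ha p' p'.2
        have h3 : (inner ℝ (p : EuclideanSpace ℝ (Fin N)) a : ℝ)
            = (inner ℝ a (p : EuclideanSpace ℝ (Fin N)) : ℝ) := real_inner_comm _ _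
        linarith
      linarith
    linarith
  -- main statement
  intro x hx p hp
  constructor
  · refine ciSup_le fun y => ?_
    show (inner ℝ (y : EuclideanSpace ℝ (Fin N)) p : ℝ)
        - (HLB R (LHstarstar Ω R H) y x - HLB R (LHstarstar Ω R H) x y) / 2
        ≤ LHstarstar Ω R H x p
    have h1 : (inner ℝ (y : EuclideanSpace ℝ (Fin N)) p : ℝ) - LHstarstar Ω R H x p
        ≤ HLB R (LHstarstar Ω R H) y x := by
      have hbdd : ∀ p' : Metric.closedBall (0 : EuclideanSpace ℝ (Fin N)) R,
          (inner ℝ (y : EuclideanSpace ℝ (Fin N)) (p' : EuclideanSpace ℝ (Fin N)) : ℝ)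
            - LHstarstar Ω R H x p' ≤ R*R + (4*(R*R) + C) := by
        intro p'
        have ha := (abs_le.mp (hip y p' (hnx y y.2) (hnp p' p'.2))).2
        have hlb := hLss_lb x hx p' p'.2
        linarith
      exact le_ciSup (f := fun p' : Metric.closedBall (0 : EuclideanSpace ℝ (Fin N)) R =>
        ((inner ℝ (y : EuclideanSpace ℝ (Fin N)) (p' : EuclideanSpace ℝ (Fin N)) : ℝ)
          - LHstarstar Ω R H x p')) (bdd_of_le hbdd) ⟨p, hp⟩
    have h2 := hskew2 y y.2 x hx
    linarith
  · refine ciSup_le fun x' => ciSup_le fun p' => ?_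
    have h1 := hLs_ge p' p'.2 x' x'.2 x hx p hp
    have h2 : (inner ℝ (x' : EuclideanSpace ℝ (Fin N)) p : ℝ)
        = (inner ℝ p (x' : EuclideanSpace ℝ (Fin N)) : ℝ) := real_inner_comm _ _
    have h3 : (inner ℝ (p' : EuclideanSpace ℝ (Fin N)) x : ℝ)
        = (inner ℝ x (p' : EuclideanSpace ℝ (Fin N)) : ℝ) := real_inner_comm _ _
    linarith
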